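/- Let $\mathcal{D}$ be a distribution on $\mathbb{R}^D \times \{-1,1\}$ whose support splits into disjoint sets $\mathcal{A}$ (label $+1$) and $\mathcal{B}$ (label $-1$) with $\inf_{a \in \mathcal{A}, b \in \mathcal{B}} \|a - b\|_p > 2\delta$. Let $f_{\text{clean}} : \mathbb{R}^D \to \mathbb{R}$ classify the support correctly ($y f_{\text{clean}}(X) > 0$ on the support), and let $(X_1,y_1),\dots,(X_N,y_N)$ be points of the support. Define $f_{\mathcal{S}}(X) = f_{\text{clean}}(X)\bigl(1 - \mathbb{I}\{X \in \cup_{i=1}^N \mathbb{B}_p(X_i,\delta)\}\bigr) + \sum_{i=1}^N y_i \mathbb{I}\{X \in \mathbb{B}_p(X_i,\delta)\}$. Then: (1) $y f_{\mathcal{S}}(X) > 0$ for every $(X,y)$ in the support of $\mathcal{D}$; (2) for every $i \in [N]$ and every $\xi$ with $\|\xi\|_p \leq \delta$, $y_i f_{\mathcal{S}}(X_i + \xi) > 0$. -/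
import Mathlib


open Classical in
/-- Existence of a CGRO classifier: given a well-separated support (margin `> 2δ`),
a clean classifier, and training points, the patched classifier `f_S` classifies the
whole support correctly and is robust on the training points. -/
theorem cgro_classifier_exists
    (D N : ℕ) (p : ENNReal) [Fact (1 ≤ p)] (δ : ℝ) (hδ : 0 < δ)
    (A B : Set (PiLp p (fun _ : Fin D => ℝ)))
    (hsep : ∀ a ∈ A, ∀ b ∈ B, 2 * δ < dist a b)
    (fclean : PiLp p (fun _ : Fin D => ℝ) → ℝ)
    (hcleanA : ∀ X ∈ A, 0 < fclean X) (hcleanB : ∀ X ∈ B, fclean X < 0)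
    (Xs : Fin N → PiLp p (fun _ : Fin D => ℝ)) (y : Fin N → ℝ)
    (hlabel : ∀ i, (y i = 1 ∧ Xs i ∈ A) ∨ (y i = -1 ∧ Xs i ∈ B)) :
    let fS : PiLp p (fun _ : Fin D => ℝ) → ℝ := fun X =>
      fclean X * (1 - if ∃ i, dist X (Xs i) ≤ δ then 1 else 0) +
        ∑ i, y i * (if dist X (Xs i) ≤ δ then 1 else 0)
    (∀ X ∈ A, 0 < fS X) ∧ (∀ X ∈ B, fS X < 0) ∧
      (∀ i : Fin N, ∀ ξ : PiLp p (fun _ : Fin D => ℝ), ‖ξ‖ ≤ δ →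
        0 < y i * fS (Xs i + ξ)) := by
  intro fS
  have hfS : ∀ X, fS X = fclean X * (1 - if ∃ i, dist X (Xs i) ≤ δ then 1 else 0) +
      ∑ i, y i * (if dist X (Xs i) ≤ δ then 1 else 0) := fun X => rfl
  have hsum : ∀ X : PiLp p (fun _ : Fin D => ℝ),
      (∑ i, y i * (if dist X (Xs i) ≤ δ then 1 else 0)) =
      ∑ i ∈ Finset.univ.filter (fun i => dist X (Xs i) ≤ δ), y i := by
    intro X
    rw [Finset.sum_filter]
    refine Finset.sum_congr rfl fun i _ => ?_
    split <;> simp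
  refine ⟨?_, ?_, ?_⟩
  · intro X hX
    rw [hfS, hsum]
    by_cases h : ∃ i, dist X (Xs i) ≤ δ
    · have hy : ∀ i, dist X (Xs i) ≤ δ → y i = 1 := by
        intro i hi
        rcases hlabel i with ⟨hy1, _⟩ | ⟨_, hB⟩
        · exact hy1
        · exact absurd (hsep X hX (Xs i) hB) (by linarith)
      rw [if_pos h]
      have hc : ∑ i ∈ Finset.univ.filter (fun i => dist X (Xs i) ≤ δ), y i
          = ((Finset.univ.filter (fun i => dist X (Xs i) ≤ δ)).card : ℝ) := by
        rw [Finset.sum_congr rfl (fun i hi => hy i (Finset.mem_filter.mp hi).2)]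
        simp
      rw [hc]
      obtain ⟨i, hi⟩ := h
      have : 0 < (Finset.univ.filter (fun i => dist X (Xs i) ≤ δ)).card :=
        Finset.card_pos.mpr ⟨i, Finset.mem_filter.mpr ⟨Finset.mem_univ i, hi⟩⟩
      have : (0 : ℝ) < ((Finset.univ.filter (fun i => dist X (Xs i) ≤ δ)).card : ℝ) := by
        exact_mod_cast this
      linarith
    · rw [if_neg h]
      have he : (Finset.univ.filter (fun i => dist X (Xs i) ≤ δ)) = ∅ := by
        refine Finset.filter_eq_empty_iff.mpr fun i _ hi => h ⟨i, hi⟩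
      rw [he]
      simpa using hcleanA X hX
  · intro X hX
    rw [hfS, hsum]
    by_cases h : ∃ i, dist X (Xs i) ≤ δ
    · have hy : ∀ i, dist X (Xs i) ≤ δ → y i = -1 := by
        intro i hi
        rcases hlabel i with ⟨_, hA⟩ | ⟨hy1, _⟩
        · exact absurd (hsep (Xs i) hA X hX) (by rw [dist_comm]; linarith)
        · exact hy1
      rw [if_pos h]
      have hc : ∑ i ∈ Finset.univ.filter (fun i => dist X (Xs i) ≤ δ), y i
          = -((Finset.univ.filter (fun i => dist X (Xs i) ≤ δ)).card : ℝ) := by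
        rw [Finset.sum_congr rfl (fun i hi => hy i (Finset.mem_filter.mp hi).2)]
        simp
      rw [hc]
      obtain ⟨i, hi⟩ := h
      have : 0 < (Finset.univ.filter (fun i => dist X (Xs i) ≤ δ)).card :=
        Finset.card_pos.mpr ⟨i, Finset.mem_filter.mpr ⟨Finset.mem_univ i, hi⟩⟩
      have : (0 : ℝ) < ((Finset.univ.filter (fun i => dist X (Xs i) ≤ δ)).card : ℝ) := by
        exact_mod_cast this
      linarith
    · rw [if_neg h]
      have he : (Finset.univ.filter (fun i => dist X (Xs i) ≤ δ)) = ∅ := by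
        refine Finset.filter_eq_empty_iff.mpr fun i _ hi => h ⟨i, hi⟩
      rw [he]
      simpa using hcleanB X hX
  · intro i ξ hξ
    set X := Xs i + ξ with hXdef
    have hdX : dist X (Xs i) ≤ δ := by
      have : dist X (Xs i) = ‖ξ‖ := by
        rw [hXdef, dist_eq_norm]
        simp
      rw [this]; exact hξ
    have h : ∃ j, dist X (Xs j) ≤ δ := ⟨i, hdX⟩
    have hy : ∀ j, dist X (Xs j) ≤ δ → y j = y i := by
      intro j hj
      rcases hlabel i with ⟨hyi, hAi⟩ | ⟨hyi, hBi⟩ <;>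
        rcases hlabel j with ⟨hyj, hAj⟩ | ⟨hyj, hBj⟩
      · rw [hyi, hyj]
      · have h1 := hsep (Xs i) hAi (Xs j) hBj
        have h2 : dist (Xs i) (Xs j) ≤ dist (Xs i) X + dist X (Xs j) := dist_triangle _ _ _
        rw [dist_comm (Xs i) X] at h2
        linarith
      · have h1 := hsep (Xs j) hAj (Xs i) hBi
        have h2 : dist (Xs j) (Xs i) ≤ dist (Xs j) X + dist X (Xs i) := dist_triangle _ _ _
        rw [dist_comm (Xs j) X] at h2
        linarith
      · rw [hyi, hyj]
    rw [hfS, hsum, if_pos h]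
    have hc : ∑ j ∈ Finset.univ.filter (fun j => dist X (Xs j) ≤ δ), y j
        = ((Finset.univ.filter (fun j => dist X (Xs j) ≤ δ)).card : ℝ) * y i := by
      rw [Finset.sum_congr rfl (fun j hj => hy j (Finset.mem_filter.mp hj).2)]
      rw [Finset.sum_const, nsmul_eq_mul]
    rw [hc]
    have hcard : (0 : ℝ) < ((Finset.univ.filter (fun j => dist X (Xs j) ≤ δ)).card : ℝ) := by
      exact_mod_cast Finset.card_pos.mpr
        ⟨i, Finset.mem_filter.mpr ⟨Finset.mem_univ i, hdX⟩⟩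
    have hyy : y i * y i = 1 := by
      rcases hlabel i with ⟨hyi, _⟩ | ⟨hyi, _⟩ <;> rw [hyi] <;> norm_num
    have : y i * (fclean X * (1 - 1) +
        ((Finset.univ.filter (fun j => dist X (Xs j) ≤ δ)).card : ℝ) * y i)
        = ((Finset.univ.filter (fun j => dist X (Xs j) ≤ δ)).card : ℝ) := by
      ring_nf
      nlinarith [hyy]
    nlinarith [hyy, hcard]
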